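/- For every real $c$, the value $2 - 2\cos(\min(|c|, \pi))$ is the greatest element of the range of the function $\theta \mapsto 2 - 2\cos(c\,\sin\theta)$ on $\mathbb{R}$; that is, $2 - 2\cos(c\sin\theta) \le 2 - 2\cos(\min(|c|,\pi))$ for all $\theta \in \mathbb{R}$, and this bound is attained at some $\theta \in \mathbb{R}$. -/
import Mathlib


open Real

lemma cos_min_abs_pi_le (x : ℝ) : Real.cos (min |x| Real.pi) ≤ Real.cos x := by
  rcases le_or_gt |x| Real.pi with h | h
  · rw [min_eq_left h, Real.cos_abs]
  · rw [min_eq_right h.le, Real.cos_pi]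
    exact Real.neg_one_le_cos x

theorem beampattern_sup (c : ℝ) :
    IsGreatest (Set.range fun θ : ℝ => 2 - 2 * Real.cos (c * Real.sin θ))
      (2 - 2 * Real.cos (min |c| Real.pi)) := by
  constructor
  · rcases le_or_gt |c| Real.pi with h | h
    · refine ⟨Real.pi / 2, ?_⟩
      simp [min_eq_left h, Real.cos_abs]
    · have hc : c ≠ 0 := by
        intro h0; rw [h0] at h; simp at h; linarith [Real.pi_pos]
      refine ⟨Real.arcsin (Real.pi / c), ?_⟩
      have h1 : |Real.pi / c| ≤ 1 := by
        rw [abs_div, abs_of_pos Real.pi_pos]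
        rw [div_le_one (lt_trans Real.pi_pos h)]
        exact h.le
      have h2 : Real.sin (Real.arcsin (Real.pi / c)) = Real.pi / c := by
        apply Real.sin_arcsin
        · linarith [abs_le.mp h1]
        · exact (abs_le.mp h1).2
      rw [min_eq_right h.le]
      simp [h2, mul_div_cancel₀ _ hc]
  · rintro y ⟨θ, rfl⟩
    simp only
    have hb : |c * Real.sin θ| ≤ |c| := by
      rw [abs_mul]
      calc |c| * |Real.sin θ| ≤ |c| * 1 := by
            exact mul_le_mul_of_nonneg_left (Real.abs_sin_le_one θ) (abs_nonneg c)
        _ = |c| := mul_one _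
    have hmono : Real.cos (min |c| Real.pi) ≤ Real.cos (min |c * Real.sin θ| Real.pi) := by
      apply Real.cos_le_cos_of_nonneg_of_le_pi
      · exact le_min (abs_nonneg _) Real.pi_pos.le
      · exact min_le_right _ _
      · exact min_le_min hb le_rfl
    have := cos_min_abs_pi_le (c * Real.sin θ)
    linarith
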